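/- Two quaternions q and q' are congruent (i.e., there exists a nonzero quaternion h with q' = h q h^{-1}) if and only if Re(q) = Re(q') and |q| = |q'|. -/

import Mathlib

open Quaternion

private lemma re_mul_comm (a b : Quaternion ℝ) : (a * b).re = (b * a).re := by
  simp only [Quaternion.re_mul]; ring

private lemma conj_of_mul_eq {q q' h : Quaternion ℝ} (hne : h ≠ 0)
    (key : h * q = q' * h) : q' = h * q * h⁻¹ := by
  rw [key, mul_assoc, mul_inv_cancel₀ hne, mul_one]

theorem quaternion_congruence_iff (q q' : Quaternion ℝ) :
    (∃ h : Quaternion ℝ, h ≠ 0 ∧ q' = h * q * h⁻¹) ↔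
      q.re = q'.re ∧ ‖q‖ = ‖q'‖ := by
  constructor
  · rintro ⟨h, hne, rfl⟩
    constructor
    · rw [re_mul_comm, ← mul_assoc, inv_mul_cancel₀ hne, one_mul]
    · rw [norm_mul, norm_mul, norm_inv]
      field_simp [norm_ne_zero_iff.mpr hne]
  · rintro ⟨hre, hnorm⟩
    have hn : ((normSq q : ℝ) : Quaternion ℝ) = ((normSq q' : ℝ) : Quaternion ℝ) := by
      rw [normSq_eq_norm_mul_self, normSq_eq_norm_mul_self, hnorm]
    by_cases hd : q' = star q
    · subst hd
      by_cases h1 : q.imI = 0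
      · by_cases h2 : q.imJ = 0
        · by_cases h3 : q.imK = 0
          · refine ⟨1, one_ne_zero, ?_⟩
            have : star q = q := by
              ext <;> simp [h1, h2, h3]
            rw [this, one_mul, inv_one, mul_one]
          · refine ⟨⟨0, 1, 0, 0⟩, ?_, ?_⟩
            · intro hcon
              have := congrArg QuaternionAlgebra.imI hcon
              simp at this
            · apply conj_of_mul_eq
              · intro hcon
                have := congrArg QuaternionAlgebra.imI hcon
                simp at this
              · obtain ⟨w, hw⟩ : ∃ w : Quaternion ℝ, w = ⟨0, 1, 0, 0⟩ := ⟨_, rfl⟩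
                rw [← hw]
                ext <;>
                  simp only [Quaternion.re_mul, Quaternion.imI_mul, Quaternion.imJ_mul,
                    Quaternion.imK_mul] <;> subst hw <;> simp [h1, h2]
        · refine ⟨⟨0, -q.imJ, q.imI, 0⟩, ?_, ?_⟩
          · intro hcon
            have := congrArg QuaternionAlgebra.imI hcon
            simp [h2] at this
          · apply conj_of_mul_eq
            · intro hcon
              have := congrArg QuaternionAlgebra.imI hcon
              simp [h2] at this
            · obtain ⟨w, hw⟩ : ∃ w : Quaternion ℝ, w = ⟨0, -q.imJ, q.imI, 0⟩ := ⟨_, rfl⟩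
              rw [← hw]
              ext <;>
                simp only [Quaternion.re_mul, Quaternion.imI_mul, Quaternion.imJ_mul,
                  Quaternion.imK_mul] <;> subst hw <;> simp [h1] <;> ring
      · refine ⟨⟨0, -q.imJ, q.imI, 0⟩, ?_, ?_⟩
        · intro hcon
          have := congrArg QuaternionAlgebra.imJ hcon
          simp [h1] at this
        · apply conj_of_mul_eq
          · intro hcon
            have := congrArg QuaternionAlgebra.imJ hcon
            simp [h1] at this
          · obtain ⟨w, hw⟩ : ∃ w : Quaternion ℝ, w = ⟨0, -q.imJ, q.imI, 0⟩ := ⟨_, rfl⟩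
            rw [← hw]
            ext <;>
              simp only [Quaternion.re_mul, Quaternion.imI_mul, Quaternion.imJ_mul,
                Quaternion.imK_mul] <;> subst hw <;> simp <;> ring
    · refine ⟨q' - star q, sub_ne_zero.mpr hd, ?_⟩
      apply conj_of_mul_eq (sub_ne_zero.mpr hd)
      have e1 : star q * q = ((normSq q : ℝ) : Quaternion ℝ) := star_mul_self q
      have e2 : q' * q' = ((2 * q'.re : ℝ) : Quaternion ℝ) * q' - ((normSq q' : ℝ) : Quaternion ℝ) := by
        have h0 : q' * star q' = ((normSq q' : ℝ) : Quaternion ℝ) := self_mul_star q'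
        rw [star_eq_two_re_sub, mul_sub, ← coe_commutes] at h0
        linear_combination (norm := noncomm_ring) -h0
      have e3 : star q = ((2 * q.re : ℝ) : Quaternion ℝ) - q := star_eq_two_re_sub q
      rw [sub_mul, e1, mul_sub, e2, e3, mul_sub, ← coe_commutes, hre, hn]
      noncomm_ring
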